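/- Let R be a commutative local ring whose maximal ideal M has a minimal generating set {x₁, ..., x_m} with m ≥ 4. Then with I = ⟨x₄⟩, J₁ = ⟨x₂, x₃, ..., x_m⟩, J₂ = ⟨x₁, x₃, ..., x_m⟩, J₃ = ⟨x₁, x₂, x₄, ..., x_m⟩, each pairwise sum Jᵢ + Jⱼ (i ≠ j) equals M and is prime, while I + Jᵢ is not a prime ideal for any i ∈ {1, 2, 3}. -/

import Mathlib

theorem stmt_13 {R : Type*} [CommRing R] [IsLocalRing R] [IsArtinianRing R]
    (m : ℕ) (hm : 4 ≤ m) (x : Fin m → R)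
    (hspan : IsLocalRing.maximalIdeal R = Ideal.span (Set.range x))
    (hmin : ∀ i : Fin m, x i ∉ Ideal.span (x '' {j | j ≠ i})) :
    let I : Ideal R := Ideal.span {x ⟨3, by omega⟩}
    let J₁ : Ideal R := Ideal.span (x '' {j | j ≠ ⟨0, by omega⟩})
    let J₂ : Ideal R := Ideal.span (x '' {j | j ≠ ⟨1, by omega⟩})
    let J₃ : Ideal R := Ideal.span (x '' {j | j ≠ ⟨2, by omega⟩})
    (J₁ + J₂ = IsLocalRing.maximalIdeal R ∧ (J₁ + J₂).IsPrime) ∧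
    (J₁ + J₃ = IsLocalRing.maximalIdeal R ∧ (J₁ + J₃).IsPrime) ∧
    (J₂ + J₃ = IsLocalRing.maximalIdeal R ∧ (J₂ + J₃).IsPrime) ∧
    ¬(I + J₁).IsPrime ∧ ¬(I + J₂).IsPrime ∧ ¬(I + J₃).IsPrime := by
  intro I J₁ J₂ J₃
  have hM : ∀ i : Fin m, x i ∈ IsLocalRing.maximalIdeal R := by
    intro i
    rw [hspan]; exact Ideal.subset_span ⟨i, rfl⟩
  have key : ∀ i k : Fin m, i ≠ k →
      Ideal.span (x '' {j | j ≠ i}) + Ideal.span (x '' {j | j ≠ k})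
        = IsLocalRing.maximalIdeal R := by
    intro i k hik
    have huniv : {j | j ≠ i} ∪ {j | j ≠ k} = Set.univ := by
      apply Set.eq_univ_iff_forall.2
      intro j
      by_cases h : j = i
      · exact Or.inr (h ▸ hik)
      · exact Or.inl h
    rw [Submodule.add_eq_sup, ← Ideal.span_union, ← Set.image_union, huniv,
      Set.image_univ, hspan]
  have hMp : (IsLocalRing.maximalIdeal R).IsPrime :=
    (IsLocalRing.maximalIdeal.isMaximal R).isPrime
  have notp : ∀ i : Fin m, (⟨3, by omega⟩ : Fin m) ≠ i →
      ¬ (I + Ideal.span (x '' {j | j ≠ i})).IsPrime := by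
    intro i h3 hp
    have hIle : I ≤ Ideal.span (x '' {j | j ≠ i}) := by
      apply Ideal.span_le.2
      intro y hy
      rw [Set.mem_singleton_iff] at hy
      exact hy ▸ Ideal.subset_span ⟨⟨3, by omega⟩, h3, rfl⟩
    have heq : I + Ideal.span (x '' {j | j ≠ i}) = Ideal.span (x '' {j | j ≠ i}) := by
      rw [Submodule.add_eq_sup, sup_eq_right.2 hIle]
    rw [heq] at hp
    have hmax := (IsArtinianRing.isPrime_iff_isMaximal _).1 hp
    have hMeq := IsLocalRing.eq_maximalIdeal hmax
    exact hmin i (by rw [hMeq]; exact hM i)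
  have ne01 : (⟨0, by omega⟩ : Fin m) ≠ ⟨1, by omega⟩ := by simp [Fin.ext_iff]
  have ne02 : (⟨0, by omega⟩ : Fin m) ≠ ⟨2, by omega⟩ := by simp [Fin.ext_iff]
  have ne12 : (⟨1, by omega⟩ : Fin m) ≠ ⟨2, by omega⟩ := by simp [Fin.ext_iff]
  have ne30 : (⟨3, by omega⟩ : Fin m) ≠ ⟨0, by omega⟩ := by simp [Fin.ext_iff]
  have ne31 : (⟨3, by omega⟩ : Fin m) ≠ ⟨1, by omega⟩ := by simp [Fin.ext_iff]
  have ne32 : (⟨3, by omega⟩ : Fin m) ≠ ⟨2, by omega⟩ := by simp [Fin.ext_iff]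
  refine ⟨⟨key _ _ ne01, ?_⟩, ⟨key _ _ ne02, ?_⟩, ⟨key _ _ ne12, ?_⟩,
    notp _ ne30, notp _ ne31, notp _ ne32⟩ <;>
    simp only [J₁, J₂, J₃, key _ _ ne01, key _ _ ne02, key _ _ ne12] <;> exact hMp
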